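/- For every k ≥ 2, the formal power series Σ_{m ≥ k+2} 2^{m+k} C(m+k-3, 2k-1) x^m equals 4x² · (4x/(1-2x)²)^k as elements of ℚ[[x]]. -/

import Mathlib

open PowerSeries

lemma pencil_aux_rescale (d : ℕ) (hd : 0 < d) :
    ((1 - 2 * PowerSeries.X : ℚ⟦X⟧) ^ d) *
      (PowerSeries.mk fun n => (2 : ℚ) ^ n * (Nat.choose (d - 1 + n) (d - 1) : ℚ)) = 1 := by
  have h := (PowerSeries.invOneSubPow ℚ d).inv_val
  rw [PowerSeries.invOneSubPow_inv_eq_one_sub_pow,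
    PowerSeries.invOneSubPow_val_eq_mk_sub_one_add_choose_of_pos _ _ hd] at h
  have h2 := congrArg (PowerSeries.rescale (2 : ℚ)) h
  rw [map_mul, map_one, map_pow, map_sub, map_one, PowerSeries.rescale_X,
    PowerSeries.rescale_mk] at h2
  have hC : PowerSeries.C (2 : ℚ) = (2 : ℚ⟦X⟧) := map_ofNat _ 2
  rw [hC] at h2
  exact h2

theorem pencil_series_identity (k : ℕ) (hk : 2 ≤ k) :
    (PowerSeries.mk fun m =>
        if k + 2 ≤ m then
          (2 : ℚ) ^ (m + k) * (Nat.choose (m + k - 3) (2 * k - 1) : ℚ)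
        else 0) =
      4 * (PowerSeries.X : ℚ⟦X⟧) ^ 2 *
        (4 * PowerSeries.X * ((1 - 2 * PowerSeries.X) ^ 2)⁻¹) ^ k := by
  set B : ℚ⟦X⟧ := PowerSeries.mk fun n =>
    (2 : ℚ) ^ n * (Nat.choose (2 * k - 1 + n) (2 * k - 1) : ℚ) with hB
  have hconst : PowerSeries.constantCoeff ((1 - 2 * PowerSeries.X) ^ 2 : ℚ⟦X⟧) ≠ 0 := by
    simp
  have hinv : (((1 - 2 * PowerSeries.X : ℚ⟦X⟧) ^ 2)⁻¹) ^ k = B := by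
    have h1 : (((1 - 2 * PowerSeries.X : ℚ⟦X⟧) ^ 2)⁻¹) ^ k *
        ((1 - 2 * PowerSeries.X : ℚ⟦X⟧) ^ (2 * k)) = 1 := by
      rw [pow_mul, ← mul_pow, PowerSeries.inv_mul_cancel _ hconst, one_pow]
    have h2 : ((1 - 2 * PowerSeries.X : ℚ⟦X⟧) ^ (2 * k)) * B = 1 := by
      rw [hB]
      exact pencil_aux_rescale (2 * k) (by omega)
    calc (((1 - 2 * PowerSeries.X : ℚ⟦X⟧) ^ 2)⁻¹) ^ k
        = (((1 - 2 * PowerSeries.X : ℚ⟦X⟧) ^ 2)⁻¹) ^ k *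
          (((1 - 2 * PowerSeries.X : ℚ⟦X⟧) ^ (2 * k)) * B) := by rw [h2, mul_one]
      _ = B := by rw [← mul_assoc, h1, one_mul]
  rw [mul_pow, mul_pow, hinv]
  have h4 : (4 : ℚ⟦X⟧) = PowerSeries.C (4 : ℚ) := (map_ofNat _ 4).symm
  have key : (4 : ℚ⟦X⟧) * PowerSeries.X ^ 2 * ((4 : ℚ⟦X⟧) ^ k * PowerSeries.X ^ k * B)
      = PowerSeries.C ((4 : ℚ) ^ (k + 1)) * (B * PowerSeries.X ^ (k + 2)) := by
    rw [h4, map_pow]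
    ring
  rw [key]
  ext m
  rw [PowerSeries.coeff_mk, PowerSeries.coeff_C_mul, PowerSeries.coeff_mul_X_pow']
  by_cases hm : k + 2 ≤ m
  · rw [if_pos hm, if_pos hm, hB, PowerSeries.coeff_mk]
    have he : 2 * k - 1 + (m - (k + 2)) = m + k - 3 := by omega
    rw [he, ← mul_assoc]
    congr 1
    rw [show (4 : ℚ) = 2 ^ 2 by norm_num, ← pow_mul, ← pow_add]
    congr 1
    omega
  · rw [if_neg hm, if_neg hm, mul_zero]
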